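/- Let n ≥ 1 and η > 0. Let S : ℝ × [−η,η] → M(2n,ℝ), (λ,t) ↦ S_λ(t), be a C¹ family of symmetric matrices, and let Ψ : ℝ × [−η,η] → M(2n,ℝ), (λ,t) ↦ Ψ_λ(t), be a C¹ family of matrices satisfying J·Ψ_λ′(t) + S_λ(t)·Ψ_λ(t) = 0 for all (λ,t) and Ψ_λ(−η) = I for all λ. Write Ψ_λ(η) in n×n block form Ψ_λ(η) = [[a_λ, b_λ],[c_λ, d_λ]]. Fix λ₀ ∈ ℝ and v ∈ ℝⁿ with b_{λ₀}·v = 0, and set u(t) := Ψ_{λ₀}(t)·(0,v) for t ∈ [−η,η]. Then ∫_{−η}^{η} ⟨(∂_λS)_{λ₀}(t)·u(t), u(t)⟩ dt = − ⟨d_{λ₀}·v, (∂_λ b)_{λ₀}·v⟩, where ∂_λ denotes the partial derivative with respect to λ evaluated at λ₀. -/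

import Mathlib

open Matrix Set

section Helpers

lemma pd_hasDerivAt {f : ℝ × ℝ → ℝ} (hf : ContDiff ℝ 1 f) (l t : ℝ) :
    HasDerivAt (fun m => f (m, t)) (fderiv ℝ f (l, t) (1, 0)) l := by
  have h1 : HasFDerivAt f (fderiv ℝ f (l, t)) (l, t) :=
    (hf.differentiable one_ne_zero (l, t)).hasFDerivAt
  have h2 : HasDerivAt (fun m : ℝ => (m, t)) ((1 : ℝ), (0 : ℝ)) l :=
    (hasDerivAt_id l).prodMk (hasDerivAt_const l t)
  exact h1.comp_hasDerivAt l h2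

lemma pd_continuous {f : ℝ × ℝ → ℝ} (hf : ContDiff ℝ 1 f) :
    Continuous (fun p : ℝ × ℝ => fderiv ℝ f p (1, 0)) :=
  (hf.continuous_fderiv one_ne_zero).clm_apply continuous_const

lemma hasDerivAt_quad {ι : Type*} [Fintype ι] {A B : ℝ → Matrix ι ι ℝ} {A' B' : Matrix ι ι ℝ}
    {x y : ι → ℝ} {t : ℝ}
    (hA : ∀ i j, HasDerivAt (fun s => A s i j) (A' i j) t)
    (hB : ∀ i j, HasDerivAt (fun s => B s i j) (B' i j) t) :
    HasDerivAt (fun s => (A s).mulVec x ⬝ᵥ (B s).mulVec y)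
      (A'.mulVec x ⬝ᵥ (B t).mulVec y + (A t).mulVec x ⬝ᵥ B'.mulVec y) t := by
  simp only [Matrix.mulVec, dotProduct]
  have key : ∀ i : ι, HasDerivAt
      (fun s => (∑ j, A s i j * x j) * (∑ j, B s i j * y j))
      ((∑ j, A' i j * x j) * (∑ j, B t i j * y j)
        + (∑ j, A t i j * x j) * (∑ j, B' i j * y j)) t := fun i =>
    (HasDerivAt.fun_sum fun j _ => (hA i j).mul_const (x j)).mul
      (HasDerivAt.fun_sum fun j _ => (hB i j).mul_const (y j))
  have := HasDerivAt.fun_sum (fun i (_ : i ∈ Finset.univ) => key i)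
  simpa [Finset.sum_add_distrib] using this

lemma alg_identity {N : Type*} [Fintype N] [DecidableEq N]
    (Jm Slm Sm P Wm : Matrix N N ℝ) (e : N → ℝ)
    (hJJ : Jm * Jm = -1) (hJT : Jmᵀ = -Jm) (hS : Smᵀ = Sm) :
    (Jm * (Jm * (Slm * P + Sm * Wm))).mulVec e ⬝ᵥ P.mulVec e
      + (Jm * Wm).mulVec e ⬝ᵥ (Jm * (Sm * P)).mulVec e
    = -(Slm.mulVec (P.mulVec e) ⬝ᵥ P.mulVec e) := by
  have hJTJ : Jmᵀ * Jm = 1 := by rw [hJT, Matrix.neg_mul, hJJ, neg_neg]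
  have h2 : ∀ x y : N → ℝ, Jm.mulVec x ⬝ᵥ Jm.mulVec y = x ⬝ᵥ y := by
    intro x y
    rw [Matrix.dotProduct_mulVec, ← Matrix.mulVec_transpose, Matrix.mulVec_mulVec, hJTJ,
      Matrix.one_mulVec]
  have hsym : ∀ x y : N → ℝ, x ⬝ᵥ Sm.mulVec y = Sm.mulVec x ⬝ᵥ y := by
    intro x y
    rw [Matrix.dotProduct_mulVec, ← Matrix.mulVec_transpose, hS]
  have h1 : Jm * (Jm * (Slm * P + Sm * Wm)) = -(Slm * P + Sm * Wm) := by
    rw [← Matrix.mul_assoc, hJJ, neg_one_mul]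
  rw [h1]
  have hterm2 : (Jm * Wm).mulVec e ⬝ᵥ (Jm * (Sm * P)).mulVec e
      = (Sm * Wm).mulVec e ⬝ᵥ P.mulVec e := by
    rw [← Matrix.mulVec_mulVec e Jm Wm, ← Matrix.mulVec_mulVec e Jm (Sm * P), h2,
      ← Matrix.mulVec_mulVec e Sm P, hsym, Matrix.mulVec_mulVec]
  rw [hterm2, Matrix.neg_mulVec, Matrix.add_mulVec, neg_dotProduct,
    add_dotProduct, Matrix.mulVec_mulVec]
  ring

end Helpers

/-- With `S`, `Ψ` as in Statement 13 (`C¹` families, `J·Ψ′ + S·Ψ = 0` on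
`[−η,η]`, `Ψ_λ(−η) = I`), write `Ψ_λ(η) = [[a_λ,b_λ],[c_λ,d_λ]]`. If `b_{λ₀}·v = 0` and
`u(t) := Ψ_{λ₀}(t)·(0,v)`, then
`∫_{−η}^{η} ⟨(∂_λS)_{λ₀}(t)·u(t), u(t)⟩ dt = −⟨d_{λ₀}·v, (∂_λb)_{λ₀}·v⟩`. -/
theorem stmt14 (n : ℕ) (hn : 1 ≤ n) (η : ℝ) (hη : 0 < η) (l₀ : ℝ)
    (S Ψ Ψt : ℝ → ℝ → Matrix (Fin n ⊕ Fin n) (Fin n ⊕ Fin n) ℝ)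
    (hSC1 : ∀ i j, ContDiff ℝ 1 fun p : ℝ × ℝ => S p.1 p.2 i j)
    (hΨC1 : ∀ i j, ContDiff ℝ 1 fun p : ℝ × ℝ => Ψ p.1 p.2 i j)
    (hSsym : ∀ l t, (S l t)ᵀ = S l t)
    (hΨt : ∀ l t i j, HasDerivAt (fun s => Ψ l s i j) (Ψt l t i j) t)
    (hODE : ∀ l, ∀ t ∈ Icc (-η) η,
      (Matrix.fromBlocks (0 : Matrix (Fin n) (Fin n) ℝ) (-1) 1 0) * Ψt l t +
        S l t * Ψ l t = 0)
    (hinit : ∀ l, Ψ l (-η) = 1)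
    (a b c d : ℝ → Matrix (Fin n) (Fin n) ℝ)
    (hblocks : ∀ l, Ψ l η = Matrix.fromBlocks (a l) (b l) (c l) (d l))
    (Sl : ℝ → Matrix (Fin n ⊕ Fin n) (Fin n ⊕ Fin n) ℝ)
    (hSl : ∀ t i j, HasDerivAt (fun m => S m t i j) (Sl t i j) l₀)
    (bl : Matrix (Fin n) (Fin n) ℝ)
    (hbl : ∀ i j, HasDerivAt (fun l => b l i j) (bl i j) l₀)
    (v : Fin n → ℝ) (hv : (b l₀).mulVec v = 0) :
    ∫ t in (-η)..η,
        (Sl t).mulVec ((Ψ l₀ t).mulVec (Sum.elim 0 v)) ⬝ᵥ (Ψ l₀ t).mulVec (Sum.elim 0 v) =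
      -((d l₀).mulVec v ⬝ᵥ bl.mulVec v) := by
  set Jm : Matrix (Fin n ⊕ Fin n) (Fin n ⊕ Fin n) ℝ := Matrix.fromBlocks 0 (-1) 1 0 with hJmdef
  set e : (Fin n ⊕ Fin n) → ℝ := Sum.elim 0 v with hedef
  have hJJ : Jm * Jm = -1 := by
    rw [hJmdef, Matrix.fromBlocks_multiply]
    ext (i | i) (j | j) <;> simp [Matrix.one_apply, Matrix.fromBlocks]
  have hJT : Jmᵀ = -Jm := by
    rw [hJmdef, Matrix.fromBlocks_transpose]
    ext (i | i) (j | j) <;>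
      simp [Matrix.fromBlocks, Matrix.transpose_apply, Matrix.one_apply, eq_comm]
  have hmemη : η ∈ Icc (-η) η := ⟨by linarith, le_rfl⟩
  -- the ODE in explicit form
  have hΨtF : ∀ l, ∀ t ∈ Icc (-η) η, Ψt l t = Jm * (S l t * Ψ l t) := by
    intro l t ht
    have h2 : Jm * Ψt l t = -(S l t * Ψ l t) := eq_neg_of_add_eq_zero_left (hODE l t ht)
    have h3 : Jm * (Jm * Ψt l t) = Jm * -(S l t * Ψ l t) := by rw [h2]
    rw [← Matrix.mul_assoc, hJJ, Matrix.mul_neg, neg_one_mul] at h3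
    exact neg_injective h3
  -- entries of the right-hand side J·S·Ψ as functions of (λ, t)
  set Fent : (Fin n ⊕ Fin n) → (Fin n ⊕ Fin n) → ℝ × ℝ → ℝ :=
    fun i j p => ∑ k, Jm i k * ∑ m, S p.1 p.2 k m * Ψ p.1 p.2 m j with hFentdef
  have hFC1 : ∀ i j, ContDiff ℝ 1 (Fent i j) := fun i j =>
    ContDiff.sum fun k _ => ContDiff.mul contDiff_const <|
      ContDiff.sum fun m _ => (hSC1 k m).mul (hΨC1 m j)
  have hFeq : ∀ l t i j, Fent i j (l, t) = (Jm * (S l t * Ψ l t)) i j := by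
    intro l t i j
    simp [hFentdef, Matrix.mul_apply, Finset.mul_sum]
  -- λ-derivative of Fent entries at λ₀
  set Fl : ℝ → Matrix (Fin n ⊕ Fin n) (Fin n ⊕ Fin n) ℝ :=
    fun s i j => fderiv ℝ (Fent i j) (l₀, s) (1, 0) with hFldef
  have hFlc : ∀ i j, Continuous fun s => Fl s i j := fun i j =>
    (pd_continuous (hFC1 i j)).comp (continuous_const.prodMk continuous_id)
  -- λ-derivative of Ψ
  set W : ℝ → Matrix (Fin n ⊕ Fin n) (Fin n ⊕ Fin n) ℝ :=
    fun t i j => ∫ s in (-η)..t, Fl s i j with hWdef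
  have hΨcont : ∀ (l : ℝ) i j, Continuous fun t => Ψ l t i j := fun l i j =>
    ((hΨC1 i j).continuous).comp (continuous_const.prodMk continuous_id)
  have hWd : ∀ t ∈ Icc (-η) η, ∀ i j, HasDerivAt (fun l => Ψ l t i j) (W t i j) l₀ := by
    intro t ht i j
    have cont_ls : ∀ x : ℝ, Continuous fun s => Fent i j (x, s) := fun x =>
      ((hFC1 i j).continuous).comp (continuous_const.prodMk continuous_id)
    have hrep : ∀ l, Ψ l t i j = (1 : Matrix (Fin n ⊕ Fin n) (Fin n ⊕ Fin n) ℝ) i j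
        + ∫ s in (-η)..t, Fent i j (l, s) := by
      intro l
      have hFTC : ∫ s in (-η)..t, Fent i j (l, s) = Ψ l t i j - Ψ l (-η) i j := by
        apply intervalIntegral.integral_eq_sub_of_hasDerivAt
        · intro s hs
          rw [uIcc_of_le ht.1] at hs
          have hs' : s ∈ Icc (-η) η := ⟨hs.1, hs.2.trans ht.2⟩
          have h := hΨt l s i j
          have heq : Ψt l s i j = Fent i j (l, s) := by rw [hFeq, hΨtF l s hs']
          rwa [heq] at h
        · exact (cont_ls l).intervalIntegrable _ _
      rw [hFTC, hinit l]
      ring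
    obtain ⟨C, hC⟩ : ∃ C, ∀ p ∈ (Metric.closedBall l₀ 1) ×ˢ uIcc (-η) t,
        ‖fderiv ℝ (Fent i j) p (1, 0)‖ ≤ C :=
      ((isCompact_closedBall l₀ 1).prod isCompact_uIcc).exists_bound_of_continuousOn
        (pd_continuous (hFC1 i j)).continuousOn
    have hInt := (intervalIntegral.hasDerivAt_integral_of_dominated_loc_of_deriv_le
      (𝕜 := ℝ) (μ := MeasureTheory.volume) (F := fun l s => Fent i j (l, s))
      (F' := fun l s => fderiv ℝ (Fent i j) (l, s) (1, 0)) (bound := fun _ => C)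
      (a := -η) (b := t) (x₀ := l₀) (s := Metric.ball l₀ 1) (Metric.ball_mem_nhds l₀ one_pos)
      (Filter.Eventually.of_forall fun x => ((cont_ls x).aestronglyMeasurable))
      ((cont_ls l₀).intervalIntegrable _ _)
      ((hFlc i j).aestronglyMeasurable)
      (MeasureTheory.ae_of_all _ fun s hs x hx =>
        hC (x, s) ⟨Metric.ball_subset_closedBall hx, uIoc_subset_uIcc hs⟩)
      (intervalIntegrable_const)
      (MeasureTheory.ae_of_all _ fun s _ x _ => pd_hasDerivAt (hFC1 i j) x s)).2
    have h2 := (hasDerivAt_const l₀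
      ((1 : Matrix (Fin n ⊕ Fin n) (Fin n ⊕ Fin n) ℝ) i j)).fun_add hInt
    have hfun : (fun l => (1 : Matrix (Fin n ⊕ Fin n) (Fin n ⊕ Fin n) ℝ) i j
        + ∫ s in (-η)..t, Fent i j (l, s)) = fun l => Ψ l t i j :=
      funext fun l => (hrep l).symm
    rw [hfun] at h2
    simpa using h2
  -- t-derivative of W
  have hWt : ∀ t i j, HasDerivAt (fun s => W s i j) (Fl t i j) t := by
    intro t i j
    exact intervalIntegral.integral_hasDerivAt_right
      ((hFlc i j).intervalIntegrable _ _)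
      ((hFlc i j).stronglyMeasurableAtFilter _ _)
      (hFlc i j).continuousAt
  -- boundary identification with bl
  have hWb : ∀ i j, W η (Sum.inl i) (Sum.inr j) = bl i j := by
    intro i j
    have h1 := hWd η hmemη (Sum.inl i) (Sum.inr j)
    have h2 : (fun l => Ψ l η (Sum.inl i) (Sum.inr j)) = fun l => b l i j := by
      funext l
      rw [hblocks l]
      simp [Matrix.fromBlocks]
    rw [h2] at h1
    exact h1.unique (hbl i j)
  -- continuity of Sl
  have hSlc : ∀ i j, Continuous fun t => Sl t i j := by
    intro i j
    have hfun : (fun t => Sl t i j)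
        = fun t => fderiv ℝ (fun p : ℝ × ℝ => S p.1 p.2 i j) (l₀, t) (1, 0) :=
      funext fun t => (hSl t i j).unique (pd_hasDerivAt (hSC1 i j) l₀ t)
    rw [hfun]
    exact (pd_continuous (hSC1 i j)).comp (continuous_const.prodMk continuous_id)
  -- identify Fl with J·(Sl·Ψ + S·W) on the interval
  have hFleq : ∀ t ∈ Icc (-η) η, Fl t = Jm * (Sl t * Ψ l₀ t + S l₀ t * W t) := by
    intro t ht
    ext i j
    have hL : HasDerivAt (fun l => Fent i j (l, t)) (Fl t i j) l₀ :=
      pd_hasDerivAt (hFC1 i j) l₀ t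
    have hR : HasDerivAt (fun l => Fent i j (l, t))
        (∑ k, Jm i k * ∑ m, (Sl t k m * Ψ l₀ t m j + S l₀ t k m * W t m j)) l₀ := by
      apply HasDerivAt.fun_sum
      intro k _
      apply HasDerivAt.const_mul
      apply HasDerivAt.fun_sum
      intro m _
      exact (hSl t k m).mul (hWd t ht m j)
    rw [hL.unique hR]
    simp [Matrix.mul_apply, Matrix.add_apply, Finset.sum_add_distrib, Finset.mul_sum]
  -- the quadratic function φ
  set φ : ℝ → ℝ := fun t => (Jm * W t).mulVec e ⬝ᵥ (Ψ l₀ t).mulVec e with hφdef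
  have hφd : ∀ t ∈ Icc (-η) η,
      HasDerivAt φ (-((Sl t).mulVec ((Ψ l₀ t).mulVec e) ⬝ᵥ (Ψ l₀ t).mulVec e)) t := by
    intro t ht
    have hA : ∀ i j, HasDerivAt (fun s => (Jm * W s) i j) ((Jm * Fl t) i j) t := by
      intro i j
      simp only [Matrix.mul_apply]
      exact HasDerivAt.fun_sum fun k _ => (hWt t k j).const_mul (Jm i k)
    have h := hasDerivAt_quad (A := fun s => Jm * W s) (B := Ψ l₀)
      (x := e) (y := e) hA (fun i j => hΨt l₀ t i j)
    have halg : (Jm * Fl t).mulVec e ⬝ᵥ (Ψ l₀ t).mulVec e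
        + (Jm * W t).mulVec e ⬝ᵥ (Ψt l₀ t).mulVec e
        = -((Sl t).mulVec ((Ψ l₀ t).mulVec e) ⬝ᵥ (Ψ l₀ t).mulVec e) := by
      rw [hFleq t ht, hΨtF l₀ t ht]
      exact alg_identity Jm (Sl t) (S l₀ t) (Ψ l₀ t) (W t) e hJJ hJT (hSsym l₀ t)
    rw [halg] at h
    exact h
  -- continuity of the integrand
  have hucont : ∀ i, Continuous fun t => (Ψ l₀ t).mulVec e i := by
    intro i
    simp only [Matrix.mulVec, dotProduct]
    exact continuous_finset_sum _ fun j _ => (hΨcont l₀ i j).mul continuous_const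
  have hgcont : Continuous fun t => (Sl t).mulVec ((Ψ l₀ t).mulVec e) ⬝ᵥ (Ψ l₀ t).mulVec e := by
    simp only [Matrix.mulVec, dotProduct]
    apply continuous_finset_sum
    intro i _
    exact (continuous_finset_sum _ fun j _ => (hSlc i j).mul (by
      simpa [Matrix.mulVec, dotProduct] using hucont j)).mul
      (by simpa [Matrix.mulVec, dotProduct] using hucont i)
  -- fundamental theorem of calculus for φ
  have hFTC2 : ∫ t in (-η)..η, -((Sl t).mulVec ((Ψ l₀ t).mulVec e) ⬝ᵥ (Ψ l₀ t).mulVec e)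
      = φ η - φ (-η) := by
    apply intervalIntegral.integral_eq_sub_of_hasDerivAt
    · intro t ht
      rw [uIcc_of_le (by linarith : (-η : ℝ) ≤ η)] at ht
      exact hφd t ht
    · exact hgcont.neg.intervalIntegrable _ _
  have hInt : ∫ t in (-η)..η, (Sl t).mulVec ((Ψ l₀ t).mulVec e) ⬝ᵥ (Ψ l₀ t).mulVec e
      = φ (-η) - φ η := by
    rw [intervalIntegral.integral_neg] at hFTC2
    linarith
  -- φ(-η) = 0
  have hW0 : W (-η) = 0 := by
    ext i j
    simp [hWdef]
  have hφ0 : φ (-η) = 0 := by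
    simp [hφdef, hW0]
  -- φ(η)
  have hPη : (Ψ l₀ η).mulVec e = Sum.elim (0 : Fin n → ℝ) ((d l₀).mulVec v) := by
    rw [hblocks l₀, hedef, Matrix.fromBlocks_mulVec]
    simp [hv]
  have hwinl : (fun j => (W η).mulVec e (Sum.inl j)) = bl.mulVec v := by
    funext j
    simp [Matrix.mulVec, dotProduct, hedef, Fintype.sum_sum_type, hWb]
  have hφη : φ η = (d l₀).mulVec v ⬝ᵥ bl.mulVec v := by
    have hw : (Jm * W η).mulVec e = Jm.mulVec ((W η).mulVec e) :=
      (Matrix.mulVec_mulVec _ _ _).symm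
    set w : (Fin n ⊕ Fin n) → ℝ := (W η).mulVec e with hwdef
    have hsplit : w = Sum.elim (w ∘ Sum.inl) (w ∘ Sum.inr) := (Sum.elim_comp_inl_inr w).symm
    have hJw : Jm.mulVec w = Sum.elim (-(w ∘ Sum.inr)) (w ∘ Sum.inl) := by
      rw [hsplit, hJmdef, Matrix.fromBlocks_mulVec]
      simp [Matrix.neg_mulVec, Matrix.one_mulVec]
    have : φ η = Jm.mulVec w ⬝ᵥ Sum.elim 0 ((d l₀).mulVec v) := by
      rw [hφdef]
      simp only []
      rw [hw, hPη]
    rw [this, hJw]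
    rw [sumElim_dotProduct_sumElim]
    have hwl : w ∘ Sum.inl = bl.mulVec v := hwinl
    rw [hwl]
    simp [dotProduct_comm]
  rw [hInt, hφ0, hφη]
  ring
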